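/- The infinite word x_5 is balanced: for every symbol a ∈ {0,1,2,3,4} and every two factors u, v of x_5 of equal length, the numbers of occurrences of a in u and in v differ by at most 1. -/

import Mathlib

/-- The characteristic Sturmian word with slope `α = √2 - 1`, indexed from 1:
`c_α[n] = ⌊α(n+1)⌋ - ⌊αn⌋`. -/
noncomputable def calpha (n : ℕ) : ℤ :=
  ⌊(Real.sqrt 2 - 1) * ((n : ℝ) + 1)⌋ - ⌊(Real.sqrt 2 - 1) * (n : ℝ)⌋

/-- `zcount m` = number of indices `1 ≤ j ≤ m` with `c_α[j] = 0`. -/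
noncomputable def zcount (m : ℕ) : ℕ :=
  ((Finset.Icc 1 m).filter fun j => calpha j = 0).card

/-- `ocount m` = number of indices `1 ≤ j ≤ m` with `c_α[j] = 1`. -/
noncomputable def ocount (m : ℕ) : ℕ :=
  ((Finset.Icc 1 m).filter fun j => calpha j = 1).card

/-- The infinite balanced word `x₅` over `{0,1,2,3,4}`, indexed from 0, obtained from
`c_α` by replacing the 0's by `(0102)^ω` and the 1's by `(34)^ω`. -/
noncomputable def x5 (i : ℕ) : ℕ :=
  if calpha (i + 1) = 0 then [0, 1, 0, 2].getD ((zcount (i + 1) - 1) % 4) 0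
  else [3, 4].getD ((ocount (i + 1) - 1) % 2) 0

/-- Number of occurrences of the symbol `a` in the length-`n` factor of `x₅`
starting at position `i`. -/
noncomputable def x5occ (a i n : ℕ) : ℕ :=
  ((Finset.range n).filter fun j => x5 (i + j) = a).card

/-! ### Auxiliary development -/

local notation "α" => (Real.sqrt 2 - 1)

noncomputable def Af (m : ℕ) : ℤ := ⌊α * (m : ℝ)⌋

lemma alpha_pos : (0:ℝ) < α := by
  have h := Real.sq_sqrt (by norm_num : (2:ℝ) ≥ 0)
  nlinarith [Real.sqrt_nonneg 2]

lemma alpha_lt_one : (α:ℝ) < 1 := by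
  have h := Real.sq_sqrt (by norm_num : (2:ℝ) ≥ 0)
  nlinarith [Real.sqrt_nonneg 2]

lemma alpha_irr : Irrational α := by
  simpa using irrational_sqrt_two.sub_intCast 1

lemma Af_one : Af 1 = 0 := by
  rw [Af, Int.floor_eq_zero_iff]
  constructor
  · simpa using alpha_pos.le
  · simpa using alpha_lt_one

lemma Af_step (m : ℕ) : Af (m+1) = Af m ∨ Af (m+1) = Af m + 1 := by
  have h1 : Af m ≤ Af (m+1) := by
    apply Int.floor_le_floor
    have := alpha_pos
    push_cast
    nlinarith
  have h2 : Af (m+1) ≤ Af m + 1 := by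
    calc Af (m+1) ≤ ⌊α * (m:ℝ) + 1⌋ :=
          Int.floor_le_floor (by push_cast; nlinarith [alpha_lt_one])
      _ = Af m + 1 := by rw [Int.floor_add_one]; norm_num [Af]
  omega

lemma Af_nonneg (m : ℕ) : 0 ≤ Af m :=
  Int.floor_nonneg.2 (mul_nonneg alpha_pos.le (Nat.cast_nonneg m))

lemma Af_le (m : ℕ) (hm : m ≠ 0) : Af m ≤ (m:ℤ) - 1 := by
  have hm1 : (1:ℝ) ≤ m := by exact_mod_cast Nat.one_le_iff_ne_zero.2 hm
  have h2 : Af m < (m:ℤ) :=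
    Int.floor_lt.2 (by push_cast; nlinarith [alpha_lt_one, alpha_pos])
  omega

lemma calpha_eq (n : ℕ) : calpha n = Af (n+1) - Af n := by
  unfold calpha Af
  push_cast
  ring_nf

lemma calpha_mem (n : ℕ) : calpha n = 0 ∨ calpha n = 1 := by
  rw [calpha_eq]
  rcases Af_step n with h | h <;> omega

lemma counts_eq (m : ℕ) : (ocount m : ℤ) = Af (m+1) ∧ (zcount m : ℤ) = (m:ℤ) - Af (m+1) := by
  induction m with
  | zero => simp [ocount, zcount, Af_one]
  | succ m ih =>
    obtain ⟨iho, ihz⟩ := ih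
    have hicc : Finset.Icc 1 (m+1) = insert (m+1) (Finset.Icc 1 m) := by
      exact (Finset.insert_Icc_right_eq_Icc_add_one (by omega)).symm
    have ho : ocount (m+1) = (if calpha (m+1) = 1 then 1 else 0) + ocount m := by
      unfold ocount
      rw [hicc, Finset.filter_insert]
      split <;>
        simp [Finset.card_insert_of_notMem (by simp : (m+1) ∉ (Finset.Icc 1 m).filter _),
          Nat.add_comm]
    have hz : zcount (m+1) = (if calpha (m+1) = 0 then 1 else 0) + zcount m := by
      unfold zcount
      rw [hicc, Finset.filter_insert]
      split <;>
        simp [Finset.card_insert_of_notMem (by simp : (m+1) ∉ (Finset.Icc 1 m).filter _),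
          Nat.add_comm]
    have hc := calpha_eq (m+1)
    rcases calpha_mem (m+1) with h | h <;>
      · rw [h] at hc
        simp only [ho, hz, h]
        norm_num
        push_cast
        omega

/-- The integer counting functions: `G a m` counts occurrences of `a` in `x5[0..m)`. -/
noncomputable def G (a m : ℕ) : ℤ :=
  match a with
  | 0 => ((m:ℤ) - Af (m+1) + 1) / 2
  | 1 => ((m:ℤ) - Af (m+1) + 2) / 4
  | 2 => ((m:ℤ) - Af (m+1)) / 4
  | 3 => (Af (m+1) + 1) / 2
  | 4 => Af (m+1) / 2
  | _ => 0

lemma step_lemma (a i : ℕ) (ha : a < 5) :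
    ((if x5 i = a then 1 else 0) : ℤ) = G a (i+1) - G a i := by
  have hc := calpha_eq (i+1)
  have h12 : Af (i+1+1) = Af (i+2) := rfl
  have hocount := (counts_eq (i+1)).1
  have hzcount := (counts_eq (i+1)).2
  have hAle := Af_le (i+1) (by omega)
  have hAnn := Af_nonneg (i+1)
  rcases calpha_mem (i+1) with h | h
  · -- c_α[i+1] = 0 : x5 i comes from (0102)^ω
    have hx : x5 i = [0,1,0,2].getD ((zcount (i+1) - 1) % 4) 0 := by
      rw [x5, if_pos h]
    have hAeq : Af (i+2) = Af (i+1) := by rw [h] at hc; omega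
    set z := zcount (i+1) with hzdef
    have hzval : (z:ℤ) = (i+1:ℤ) - Af (i+2) := by
      rw [hzdef]; push_cast; omega
    have hz1 : 1 ≤ z := by omega
    interval_cases a <;>
      · simp only [G]
        rcases (show (z-1)%4 = 0 ∨ (z-1)%4 = 1 ∨ (z-1)%4 = 2 ∨ (z-1)%4 = 3 by omega)
          with hk | hk | hk | hk <;>
          · have h12 : Af (i+1+1) = Af (i+2) := rfl
            rw [hx, hk]
            norm_num
            push_cast [h12]
            omega
  · -- c_α[i+1] = 1 : x5 i comes from (34)^ω
    have hne : ¬ (calpha (i+1) = 0) := by omega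
    have hx : x5 i = [3,4].getD ((ocount (i+1) - 1) % 2) 0 := by
      rw [x5, if_neg hne]
    have hAeq : Af (i+2) = Af (i+1) + 1 := by rw [h] at hc; omega
    set z := ocount (i+1) with hzdef
    have hzval : (z:ℤ) = Af (i+2) := by rw [hzdef]; omega
    have hz1 : 1 ≤ z := by omega
    interval_cases a <;>
      · simp only [G]
        rcases (show (z-1)%2 = 0 ∨ (z-1)%2 = 1 by omega) with hk | hk <;>
          · have h12 : Af (i+1+1) = Af (i+2) := rfl
            rw [hx, hk]
            norm_num
            push_cast [h12]
            omega

lemma x5occ_eq (a i n : ℕ) (ha : a < 5) : (x5occ a i n : ℤ) = G a (i+n) - G a i := by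
  induction n with
  | zero => simp [x5occ]
  | succ n ih =>
    have hstep : x5occ a i (n+1) = (if x5 (i+n) = a then 1 else 0) + x5occ a i n := by
      unfold x5occ
      rw [Finset.range_add_one, Finset.filter_insert]
      split <;>
        simp [Finset.card_insert_of_notMem (by simp : n ∉ (Finset.range n).filter _),
          Nat.add_comm]
    have hs := step_lemma a (i+n) ha
    rw [hstep, show i + (n+1) = (i+n)+1 by omega]
    push_cast
    split at hs <;> split <;> omega

lemma floor_add_div (x : ℝ) (c k : ℤ) (hk : 0 < k) : (⌊x⌋ + c) / k = ⌊(x + c) / k⌋ := by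
  symm
  rw [Int.floor_eq_iff]
  set q := (⌊x⌋ + c) / k with hq
  set r := (⌊x⌋ + c) % k with hr
  have hqr : k * q + r = ⌊x⌋ + c := Int.mul_ediv_add_emod _ _
  have hr0 : 0 ≤ r := Int.emod_nonneg _ (ne_of_gt hk)
  have hrk : r < k := Int.emod_lt_of_pos _ hk
  have hkR : (0:ℝ) < (k:ℤ) := by exact_mod_cast hk
  have hqrR : (k:ℝ) * q + r = (⌊x⌋ : ℝ) + c := by exact_mod_cast congrArg (Int.cast : ℤ → ℝ) hqr
  have hfl := Int.floor_le x
  have hfu := Int.lt_floor_add_one x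
  have hrkR : (r:ℝ) + 1 ≤ k := by exact_mod_cast hrk
  have hr0R : (0:ℝ) ≤ r := by exact_mod_cast hr0
  constructor
  · rw [le_div_iff₀ hkR]
    nlinarith
  · rw [div_lt_iff₀ hkR]
    push_cast
    nlinarith

lemma floor_div (x : ℝ) (k : ℤ) (hk : 0 < k) : ⌊x⌋ / k = ⌊x / k⌋ := by
  simpa using floor_add_div x 0 k hk

lemma AfR (m : ℕ) : Af (m+1) = ⌊α * ((m:ℝ) + 1)⌋ := by
  rw [Af]; congr 1; push_cast; ring

lemma Zfloor (m : ℕ) : (m:ℤ) - Af (m+1) = ⌊((1:ℝ) - α) * ((m:ℝ) + 1)⌋ := by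
  have hirr : Irrational (α * ((m:ℝ) + 1)) := by
    have h := alpha_irr.mul_natCast (m := m+1) (by omega)
    have : ((m+1:ℕ):ℝ) = (m:ℝ) + 1 := by push_cast; ring
    rwa [this] at h
  set y := α * ((m:ℝ) + 1) with hy
  have h1 : (⌊y⌋ : ℝ) ≤ y := Int.floor_le y
  have h2 : y < ⌊y⌋ + 1 := Int.lt_floor_add_one y
  have hlt : (⌊y⌋ : ℝ) < y := lt_of_le_of_ne h1 (fun hh => hirr.ne_int ⌊y⌋ hh.symm)
  have hAf : Af (m+1) = ⌊y⌋ := AfR m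
  rw [hAf]
  symm
  rw [Int.floor_eq_iff]
  constructor
  · push_cast
    nlinarith
  · push_cast
    nlinarith

lemma Gfloor (a : ℕ) (ha : a < 5) : ∃ d γ : ℝ, ∀ m : ℕ, G a m = ⌊d * m + γ⌋ := by
  interval_cases a
  · refine ⟨(1 - α)/2, (2 - α)/2, fun m => ?_⟩
    show ((m:ℤ) - Af (m+1) + 1) / 2 = _
    rw [Zfloor m, floor_add_div _ 1 2 (by norm_num)]
    congr 1
    push_cast
    ring
  · refine ⟨(1 - α)/4, (3 - α)/4, fun m => ?_⟩
    show ((m:ℤ) - Af (m+1) + 2) / 4 = _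
    rw [Zfloor m, floor_add_div _ 2 4 (by norm_num)]
    congr 1
    push_cast
    ring
  · refine ⟨(1 - α)/4, (1 - α)/4, fun m => ?_⟩
    show ((m:ℤ) - Af (m+1)) / 4 = _
    rw [Zfloor m, floor_div _ 4 (by norm_num)]
    congr 1
    push_cast
    ring
  · refine ⟨α/2, (α + 1)/2, fun m => ?_⟩
    show (Af (m+1) + 1) / 2 = _
    rw [AfR m, floor_add_div _ 1 2 (by norm_num)]
    congr 1
    push_cast
    ring
  · refine ⟨α/2, α/2, fun m => ?_⟩
    show Af (m+1) / 2 = _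
    rw [AfR m, floor_div _ 2 (by norm_num)]
    congr 1
    push_cast
    ring

lemma key_bound (d γ : ℝ) (F : ℕ → ℤ) (hF : ∀ m, F m = ⌊d * m + γ⌋) (i i' n : ℕ) :
    ((F (i+n) - F i) - (F (i'+n) - F i')).natAbs ≤ 1 := by
  have bound : ∀ j : ℕ, ⌊d * n⌋ ≤ F (j+n) - F j ∧ F (j+n) - F j ≤ ⌊d * n⌋ + 1 := by
    intro j
    have hFn : F (j+n) = ⌊(d * j + γ) + d * n⌋ := by
      rw [hF (j+n)]
      congr 1
      push_cast
      ring
    have hFj : F j = ⌊d * j + γ⌋ := hF j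
    set x := d * j + γ
    set t := d * (n:ℝ)
    have l1 := Int.floor_le x
    have l2 := Int.lt_floor_add_one x
    have l3 := Int.floor_le t
    have l4 := Int.lt_floor_add_one t
    constructor
    · have : ⌊x⌋ + ⌊t⌋ ≤ ⌊x + t⌋ := by
        rw [Int.le_floor]
        push_cast
        linarith
      omega
    · have : ⌊x + t⌋ < ⌊x⌋ + ⌊t⌋ + 2 := by
        rw [Int.floor_lt]
        push_cast
        linarith
      omega
  have b1 := bound i
  have b2 := bound i'
  omega

theorem x5_balanced :
    ∀ a : ℕ, a < 5 → ∀ i i' n : ℕ,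
      ((x5occ a i n : ℤ) - (x5occ a i' n : ℤ)).natAbs ≤ 1 := by
  intro a ha i i' n
  rw [x5occ_eq a i n ha, x5occ_eq a i' n ha]
  obtain ⟨d, γ, hF⟩ := Gfloor a ha
  exact key_bound d γ (G a) hF i i' n
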